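/- Let n ≥ 1, let Q ⊆ ℕⁿ be a finite set of cardinality r ≥ 1, let ε > 0 be real, and let u ∈ ℝ[X] be a polynomial such that every exponent vector γ in the support of u can be written as γ = α + β with α, β ∈ Q, and such that |u_γ| ≤ ε/r for every γ in the support of u. Then ε·Σ_{α∈Q} X^{2α} + u is a weighted sum of squares: there exist finitely many nonnegative reals c_i and polynomials s_i ∈ ℝ[X] with ε·Σ_{α∈Q} X^{2α} + u = Σ_i c_i s_i²; in particular it is nonnegative on ℝⁿ. -/

import Mathlib

open MvPolynomial

noncomputable section

lemma sq_term {n : ℕ} (a b : Fin n →₀ ℕ) (c : ℝ) :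
    (|c|/2) • ((monomial a (1:ℝ)) + (if 0 ≤ c then (1:ℝ) else -1) • monomial b 1)^2
    = (|c|/2) • monomial (a+a) (1:ℝ) + (|c|/2) • monomial (b+b) (1:ℝ)
      + c • monomial (a+b) (1:ℝ) := by
  have hab : (monomial a (1:ℝ)) * monomial b 1 = monomial (a+b) (1:ℝ) := by
    simp [monomial_mul]
  have haa : (monomial a (1:ℝ)) * monomial a 1 = monomial (a+a) (1:ℝ) := by
    simp [monomial_mul]
  have hbb : (monomial b (1:ℝ)) * monomial b 1 = monomial (b+b) (1:ℝ) := by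
    simp [monomial_mul]
  simp only [smul_eq_C_mul]
  split_ifs with h
  · rw [abs_of_nonneg h, ← hab, ← haa, ← hbb]
    have h2 : (C c : MvPolynomial (Fin n) ℝ) = C (c/2) + C (c/2) := by
      rw [← C_add]; ring_nf
    rw [h2]; simp only [C_1, map_neg]; ring
  · rw [abs_of_neg (not_le.mp h), ← hab, ← haa, ← hbb]
    have h2 : (C c : MvPolynomial (Fin n) ℝ) = -(C (-c/2) + C (-c/2)) := by
      rw [← C_add, ← C_neg]; ring_nf
    rw [h2]; simp only [C_1, map_neg]; ring

set_option maxHeartbeats 1000000 in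
theorem stmt_17 {n : ℕ} (hn : 1 ≤ n) (Q : Finset (Fin n →₀ ℕ)) (hQcard : 1 ≤ Q.card)
    (ε : ℝ) (hε : 0 < ε) (u : MvPolynomial (Fin n) ℝ)
    (hsupp : ∀ γ ∈ u.support, ∃ α ∈ Q, ∃ β ∈ Q, γ = α + β)
    (hsmall : ∀ γ ∈ u.support, |u.coeff γ| ≤ ε / (Q.card : ℝ)) :
    (∃ (t : ℕ) (c : Fin t → ℝ) (s : Fin t → MvPolynomial (Fin n) ℝ),
      (∀ i, 0 ≤ c i) ∧
      ε • (∑ α ∈ Q, monomial (α + α) (1 : ℝ)) + u = ∑ i, c i • (s i) ^ 2) ∧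
    ∀ x : Fin n → ℝ, 0 ≤ eval x (ε • (∑ α ∈ Q, monomial (α + α) (1 : ℝ)) + u) := by
  classical
  choose a ha b hb hab using hsupp
  set A : u.support → (Fin n →₀ ℕ) := fun γ => a γ.1 γ.2 with hA
  set B : u.support → (Fin n →₀ ℕ) := fun γ => b γ.1 γ.2 with hB
  set cc : u.support → ℝ := fun γ => u.coeff γ.1 with hcc
  set sq : u.support → MvPolynomial (Fin n) ℝ :=
    fun γ => monomial (A γ) 1 + (if 0 ≤ cc γ then (1:ℝ) else -1) • monomial (B γ) 1 with hsq
  set w : (Fin n →₀ ℕ) → ℝ := fun α => ∑ γ ∈ u.support.attach,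
      ((|cc γ|/2) * (if A γ = α then 1 else 0) + (|cc γ|/2) * (if B γ = α then 1 else 0)) with hw
  have hrpos : (0:ℝ) < (Q.card : ℝ) := by exact_mod_cast hQcard
  -- key1
  have key1 : ∑ γ ∈ u.support.attach, (|cc γ|/2) • (sq γ)^2
      = (∑ γ ∈ u.support.attach, ((|cc γ|/2) • monomial (A γ + A γ) (1:ℝ)
          + (|cc γ|/2) • monomial (B γ + B γ) (1:ℝ))) + u := by
    have : ∀ γ ∈ u.support.attach, (|cc γ|/2) • (sq γ)^2
        = ((|cc γ|/2) • monomial (A γ + A γ) (1:ℝ) + (|cc γ|/2) • monomial (B γ + B γ) (1:ℝ))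
          + cc γ • monomial (γ.1) (1:ℝ) := by
      intro γ _
      have := sq_term (A γ) (B γ) (cc γ)
      rw [hsq]
      rw [this]
      have hγ : A γ + B γ = γ.1 := (hab γ.1 γ.2).symm
      rw [hγ]
    rw [Finset.sum_congr rfl this, Finset.sum_add_distrib]
    congr 1
    have : ∑ γ ∈ u.support.attach, cc γ • monomial (γ.1) (1:ℝ)
        = ∑ γ ∈ u.support, monomial γ (u.coeff γ) := by
      rw [← Finset.sum_attach u.support (fun γ => monomial γ (u.coeff γ))]
      apply Finset.sum_congr rfl
      intro γ _
      rw [hcc, smul_monomial, smul_eq_mul, mul_one]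
    rw [this, support_sum_monomial_coeff]
  -- key2
  have key2 : ∑ α ∈ Q, w α • monomial (α+α) (1:ℝ)
      = ∑ γ ∈ u.support.attach, ((|cc γ|/2) • monomial (A γ + A γ) (1:ℝ)
          + (|cc γ|/2) • monomial (B γ + B γ) (1:ℝ)) := by
    rw [hw]
    simp only [Finset.sum_smul]
    rw [Finset.sum_comm]
    apply Finset.sum_congr rfl
    intro γ _
    have hAQ : A γ ∈ Q := ha γ.1 γ.2
    have hBQ : B γ ∈ Q := hb γ.1 γ.2
    simp only [add_smul, mul_ite, mul_one, mul_zero, ite_smul, zero_smul,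
      Finset.sum_add_distrib, Finset.sum_ite_eq, hAQ, hBQ, if_true]
  -- key3
  have key3 : ∀ α ∈ Q, w α ≤ ε := by
    intro α hα
    have hbound : ∀ (f : u.support → (Fin n →₀ ℕ)),
        (∀ γ, f γ ∈ Q) → (∀ γ1 γ2, f γ1 = f γ2 → A γ1 = A γ2 → B γ1 = B γ2) →
        True := fun _ _ _ => trivial
    have step : ∀ (f g : u.support → (Fin n →₀ ℕ)), (∀ γ, g γ ∈ Q) →
        (∀ γ1 γ2, f γ1 = α → f γ2 = α → g γ1 = g γ2 → γ1 = γ2) →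
        ∑ γ ∈ u.support.attach, (|cc γ|/2) * (if f γ = α then 1 else 0) ≤ ε/2 := by
      intro f g hgQ hinj
      have h1 : ∑ γ ∈ u.support.attach, (|cc γ|/2) * (if f γ = α then 1 else 0)
          = ∑ γ ∈ u.support.attach.filter (fun γ => f γ = α), (|cc γ|/2) := by
        rw [Finset.sum_filter]
        apply Finset.sum_congr rfl
        intro γ _
        split_ifs <;> simp
      rw [h1]
      have hcard : (u.support.attach.filter (fun γ => f γ = α)).card ≤ Q.card := by
        apply Finset.card_le_card_of_injOn g
        · intro γ _; exact hgQ γ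
        · intro γ1 h1' γ2 h2' hg
          exact hinj γ1 γ2 (Finset.mem_filter.mp h1').2 (Finset.mem_filter.mp h2').2 hg
      calc ∑ γ ∈ u.support.attach.filter (fun γ => f γ = α), (|cc γ|/2)
          ≤ (u.support.attach.filter (fun γ => f γ = α)).card • (ε / (Q.card : ℝ) / 2) := by
            apply Finset.sum_le_card_nsmul
            intro γ _
            have := hsmall γ.1 γ.2
            rw [hcc]; linarith
        _ ≤ (Q.card : ℕ) • (ε / (Q.card : ℝ) / 2) := by
            apply nsmul_le_nsmul_left _ hcard
            positivity
        _ = ε / 2 := by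
            have hne : (Q.card:ℝ) ≠ 0 := ne_of_gt hrpos
            rw [nsmul_eq_mul]
            field_simp
    have s1 := step A B (fun γ => hb γ.1 γ.2) (by
      intro γ1 γ2 h1' h2' hBe
      apply Subtype.ext
      rw [hab γ1.1 γ1.2, hab γ2.1 γ2.2]
      show A γ1 + B γ1 = A γ2 + B γ2
      rw [h1', h2', hBe])
    have s2 := step B A (fun γ => ha γ.1 γ.2) (by
      intro γ1 γ2 h1' h2' hAe
      apply Subtype.ext
      rw [hab γ1.1 γ1.2, hab γ2.1 γ2.2]
      show A γ1 + B γ1 = A γ2 + B γ2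
      rw [h1', h2', hAe])
    rw [hw]
    simp only [Finset.sum_add_distrib]
    linarith
  -- main identity
  have hdecomp : ε • (∑ α ∈ Q, monomial (α + α) (1 : ℝ)) + u
      = ∑ γ ∈ u.support.attach, (|cc γ|/2) • (sq γ)^2
        + ∑ α ∈ Q, (ε - w α) • (monomial α (1:ℝ))^2 := by
    have hm : ∀ α : Fin n →₀ ℕ, (monomial α (1:ℝ))^2 = monomial (α+α) (1:ℝ) := by
      intro α; rw [pow_two]; simp [monomial_mul]
    simp only [hm, sub_smul, Finset.sum_sub_distrib]
    rw [key1, key2, Finset.smul_sum]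
    abel
  -- packaging
  have e : ((↥u.support) ⊕ (↥Q)) ≃ Fin (u.support.card + Q.card) :=
    (Equiv.sumCongr u.support.equivFin Q.equivFin).trans finSumFinEquiv
  set F : (↥u.support) ⊕ (↥Q) → ℝ :=
    Sum.elim (fun γ => |cc γ|/2) (fun α => ε - w α.1) with hF
  set G : (↥u.support) ⊕ (↥Q) → MvPolynomial (Fin n) ℝ :=
    Sum.elim (fun γ => sq γ) (fun α => monomial α.1 1) with hG
  have hsum : ∑ i : Fin (u.support.card + Q.card), F (e.symm i) • (G (e.symm i))^2
      = ε • (∑ α ∈ Q, monomial (α + α) (1 : ℝ)) + u := by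
    rw [Equiv.sum_comp e.symm (fun x => F x • (G x)^2), Fintype.sum_sum_type]
    simp only [hF, hG, Sum.elim_inl, Sum.elim_inr]
    rw [Finset.univ_eq_attach, Finset.univ_eq_attach,
      Finset.sum_attach Q (fun α => (ε - w α) • (monomial α (1:ℝ))^2)]
    rw [hdecomp]
  constructor
  · exact ⟨u.support.card + Q.card, fun i => F (e.symm i), fun i => G (e.symm i),
      by
        intro i
        rcases h : e.symm i with γ | α
        · simp only [hF, h, Sum.elim_inl]; positivity
        · simp only [hF, h, Sum.elim_inr]
          have := key3 α.1 α.2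
          linarith,
      hsum.symm⟩
  · intro x
    rw [hdecomp]
    simp only [map_add, map_sum, smul_eq_C_mul, map_mul, eval_C, map_pow]
    apply add_nonneg
    · apply Finset.sum_nonneg; intro γ _; positivity
    · apply Finset.sum_nonneg; intro α hα
      have h1 := key3 α hα
      have h2 := sq_nonneg (eval x (monomial α (1:ℝ)))
      nlinarith
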